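/- Fix an integer c ≥ 4. Then, as n → ∞, the average effective resistance of the two-dimensional toroidal grid with one side fixed equal to c satisfies R_ave(T_{c,n}) ~ n/(12c²)·c, i.e. lim_{n→∞} R_ave(T_{c,n}) / n = 1/(12c); in particular, with total size N = c·n, R_ave(T_{c,N/c}) ~ N/(12c²). -/

import Mathlib

open Real Finset

/-- Average effective resistance of the two-dimensional toroidal grid `T_{M1,M2}`. -/
noncomputable def Rave2 (M1 M2 : ℕ) : ℝ :=
  (1 / ((M1 : ℝ) * M2)) * ∑ i ∈ Finset.range M1, ∑ j ∈ Finset.range M2,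
    if i = 0 ∧ j = 0 then 0
    else 1 / (4 - 2 * Real.cos (2 * Real.pi * i / M1) - 2 * Real.cos (2 * Real.pi * j / M2))

lemma sum_geo_d1 (x : ℂ) (n : ℕ) :
    (x - 1)^2 * ∑ v ∈ Finset.range n, (v : ℂ) * x^v
      = ((n:ℂ) - 1) * x^(n+1) - (n:ℂ) * x^n + x := by
  induction n with
  | zero => simp
  | succ n ih =>
    rw [Finset.sum_range_succ, mul_add]
    push_cast
    linear_combination ih

lemma sum_geo_d2 (x : ℂ) (n : ℕ) :
    (x - 1)^3 * ∑ v ∈ Finset.range n, (v : ℂ)^2 * x^v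
      = ((n:ℂ) - 1)^2 * x^(n+2) - (2*(n:ℂ)^2 - 2*n - 1) * x^(n+1) + (n:ℂ)^2 * x^n - x^2 - x := by
  induction n with
  | zero => simp
  | succ n ih =>
    rw [Finset.sum_range_succ, mul_add]
    push_cast
    linear_combination ih

lemma key_root (n : ℕ) (ω : ℂ) (hω : ω^n = 1) (hω1 : ω ≠ 1) :
    (2*ω - ω^2 - 1) * ∑ v ∈ Finset.range n, (v : ℂ) * ((n:ℂ) - v) * ω^v = -2 * n * ω := by
  have hd : ω - 1 ≠ 0 := sub_ne_zero.mpr hω1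
  have h1 := sum_geo_d1 ω n
  have h2 := sum_geo_d2 ω n
  have hp1 : ω^(n+1) = ω := by rw [pow_succ, hω, one_mul]
  have hp2 : ω^(n+2) = ω^2 := by rw [pow_add, hω, one_mul]
  rw [hp1, hω] at h1
  rw [hp1, hp2, hω] at h2
  have hsum : ∑ v ∈ Finset.range n, (v : ℂ) * ((n:ℂ) - v) * ω^v
      = (n:ℂ) * (∑ v ∈ Finset.range n, (v:ℂ) * ω^v) - ∑ v ∈ Finset.range n, (v:ℂ)^2 * ω^v := by
    rw [Finset.mul_sum, ← Finset.sum_sub_distrib]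
    exact Finset.sum_congr rfl (fun v _ => by ring)
  rw [hsum]
  have E : (ω - 1) * ((ω-1)^2 * ((n:ℂ) * (∑ v ∈ Finset.range n, (v:ℂ) * ω^v)
      - ∑ v ∈ Finset.range n, (v:ℂ)^2 * ω^v)) = (ω - 1) * (2 * n * ω) := by
    linear_combination (n:ℂ) * (ω - 1) * h1 - h2
  have E2 := mul_left_cancel₀ hd E
  linear_combination -E2

lemma csum1 (n : ℕ) : ∑ v ∈ Finset.range n, (v:ℂ) = (n:ℂ)*((n:ℂ)-1)/2 := by
  induction n with
  | zero => simp
  | succ n ih => rw [Finset.sum_range_succ, ih]; push_cast; ring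

lemma csum2 (n : ℕ) : ∑ v ∈ Finset.range n, (v:ℂ)^2 = (n:ℂ)*((n:ℂ)-1)*(2*(n:ℂ)-1)/6 := by
  induction n with
  | zero => simp
  | succ n ih => rw [Finset.sum_range_succ, ih]; push_cast; ring

lemma csum_vnv (n : ℕ) : ∑ v ∈ Finset.range n, (v:ℂ)*((n:ℂ)-v) = (n:ℂ)*((n:ℂ)^2-1)/6 := by
  have h : ∑ v ∈ Finset.range n, (v:ℂ)*((n:ℂ)-v)
      = (n:ℂ) * (∑ v ∈ Finset.range n, (v:ℂ)) - ∑ v ∈ Finset.range n, (v:ℂ)^2 := by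
    rw [Finset.mul_sum, ← Finset.sum_sub_distrib]
    exact Finset.sum_congr rfl (fun v _ => by ring)
  rw [h, csum1, csum2]; ring

lemma sumA (n : ℕ) (hn : 1 ≤ n) :
    ∑ j ∈ Finset.range n, (if j = 0 then (0:ℝ) else 1/(2 - 2*Real.cos (2*Real.pi*j/n)))
      = ((n:ℝ)^2 - 1)/12 := by
  have hn0 : (n:ℂ) ≠ 0 := Nat.cast_ne_zero.mpr (by omega)
  set ζ : ℂ := Complex.exp (2*Real.pi*Complex.I/n) with hζdef
  have hζpow : ∀ k : ℕ, ζ^k = Complex.exp (2*Real.pi*Complex.I*k/n) := by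
    intro k
    rw [hζdef, ← Complex.exp_nat_mul]
    congr 1; ring
  have hζn : ζ^n = 1 := by
    rw [hζpow n]
    rw [mul_div_assoc, div_self hn0, mul_one, Complex.exp_two_pi_mul_I]
  have hζk1 : ∀ k : ℕ, 0 < k → k < n → ζ^k ≠ 1 := by
    intro k hk1 hk2 h
    rw [hζpow k, Complex.exp_eq_one_iff] at h
    obtain ⟨m, hm⟩ := h
    have hπ : (Real.pi : ℂ) ≠ 0 := Complex.ofReal_ne_zero.mpr Real.pi_ne_zero
    have hI : Complex.I ≠ 0 := Complex.I_ne_zero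
    have hk : (k:ℂ) = (m:ℂ) * n := by
      field_simp at hm
      have h2 : (2:ℂ) * Real.pi * Complex.I * k = 2 * Real.pi * Complex.I * ((m:ℂ)*n) := by
        linear_combination (2 * Real.pi * Complex.I : ℂ) * hm
      have := mul_left_cancel₀ (show (2:ℂ) * Real.pi * Complex.I ≠ 0 by
        simp [hπ, hI, Complex.I_ne_zero]) h2
      exact this
    have hkz : (k:ℤ) = m * n := by exact_mod_cast hk
    have hnz : (0:ℤ) < n := by exact_mod_cast (by omega : 0 < n)
    have hkz1 : (0:ℤ) < k := by exact_mod_cast hk1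
    have hkz2 : (k:ℤ) < n := by exact_mod_cast hk2
    have hm0 : 0 < m := by nlinarith
    have hm1 : 1 ≤ m := hm0
    nlinarith
  have h2n : (-2 * (n:ℂ)) ≠ 0 := by
    simp [hn0]
  -- bridge: real cos to complex
  have hbridge : ∀ j : ℕ, (((2 - 2*Real.cos (2*Real.pi*j/n)) : ℝ) : ℂ) * ζ^j
      = 2*ζ^j - (ζ^j)^2 - 1 := by
    intro j
    set θ : ℝ := 2*Real.pi*j/n with hθ
    have hexp : ζ^j = Complex.exp ((θ:ℂ) * Complex.I) := by
      rw [hζpow j]; congr 1; push_cast [hθ]; ring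
    have hcos : 2 * Complex.cos (θ:ℂ) = Complex.exp ((θ:ℂ)*Complex.I) + Complex.exp (-(θ:ℂ)*Complex.I) :=
      Complex.two_cos _
    have hinv : Complex.exp (-(θ:ℂ)*Complex.I) = (Complex.exp ((θ:ℂ)*Complex.I))⁻¹ := by
      rw [← Complex.exp_neg]; congr 1; ring
    have hne : Complex.exp ((θ:ℂ)*Complex.I) ≠ 0 := Complex.exp_ne_zero _
    rw [hexp]
    push_cast [Complex.ofReal_cos]
    rw [hinv] at hcos
    have hmul : Complex.exp ((θ:ℂ)*Complex.I) * (Complex.exp ((θ:ℂ)*Complex.I))⁻¹ = 1 :=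
      mul_inv_cancel₀ hne
    linear_combination (-Complex.exp ((θ:ℂ)*Complex.I)) * hcos - hmul
  -- per-j formula
  have hterm : ∀ j ∈ (Finset.range n).erase 0,
      ((1/(2 - 2*Real.cos (2*Real.pi*j/n)) : ℝ) : ℂ)
        = (∑ v ∈ Finset.range n, (v:ℂ)*((n:ℂ)-v) * (ζ^j)^v) * (-2*(n:ℂ))⁻¹ := by
    intro j hj
    rw [Finset.mem_erase, Finset.mem_range] at hj
    have hωn : (ζ^j)^n = 1 := by rw [← pow_mul, mul_comm, pow_mul, hζn, one_pow]
    have hω1 : ζ^j ≠ 1 := hζk1 j (by omega) hj.2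
    have hkey := key_root n (ζ^j) hωn hω1
    have hω0 : ζ^j ≠ 0 := pow_ne_zero _ (Complex.exp_ne_zero _)
    have hrs : (((2 - 2*Real.cos (2*Real.pi*j/n)) : ℝ) : ℂ)
        * (∑ v ∈ Finset.range n, (v:ℂ)*((n:ℂ)-v) * (ζ^j)^v) = -2*(n:ℂ) := by
      have hb := hbridge j
      have h3 : ζ^j * ((((2 - 2*Real.cos (2*Real.pi*j/n)) : ℝ) : ℂ)
          * (∑ v ∈ Finset.range n, (v:ℂ)*((n:ℂ)-v) * (ζ^j)^v)) = ζ^j * (-2*(n:ℂ)) := by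
        linear_combination (∑ v ∈ Finset.range n, (v:ℂ)*((n:ℂ)-v) * (ζ^j)^v) * hb + hkey
      exact mul_left_cancel₀ hω0 h3
    rw [Complex.ofReal_div, Complex.ofReal_one, one_div]
    exact inv_eq_of_mul_eq_one_right (by rw [← mul_assoc, hrs, mul_inv_cancel₀ h2n])
  -- now the sum
  apply Complex.ofReal_injective
  rw [Complex.ofReal_sum]
  have hpush : ∀ i ∈ Finset.range n, (((if i = 0 then (0:ℝ) else 1/(2 - 2*Real.cos (2*Real.pi*i/n))) : ℝ) : ℂ)
      = if i = 0 then (0:ℂ) else ((1/(2 - 2*Real.cos (2*Real.pi*i/n)) : ℝ) : ℂ) := by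
    intro i _
    split <;> simp
  rw [Finset.sum_congr rfl hpush]
  have hsplit : ∑ j ∈ Finset.range n, (if j = 0 then (0:ℂ) else ((1/(2 - 2*Real.cos (2*Real.pi*j/n)) : ℝ) : ℂ))
      = ∑ j ∈ (Finset.range n).erase 0, ((1/(2 - 2*Real.cos (2*Real.pi*j/n)) : ℝ) : ℂ) := by
    rw [eq_comm]
    rw [Finset.sum_congr rfl (fun j hj => ?_), Finset.sum_erase]
    · simp
    · rw [Finset.mem_erase] at hj
      rw [if_neg hj.1]
  rw [hsplit, Finset.sum_congr rfl hterm, ← Finset.sum_mul]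
  have hswap : ∑ j ∈ (Finset.range n).erase 0, ∑ v ∈ Finset.range n, (v:ℂ)*((n:ℂ)-v) * (ζ^j)^v
      = ∑ v ∈ Finset.range n, (v:ℂ)*((n:ℂ)-v) * (∑ j ∈ (Finset.range n).erase 0, (ζ^v)^j) := by
    rw [Finset.sum_comm]
    apply Finset.sum_congr rfl
    intro v _
    rw [Finset.mul_sum]
    apply Finset.sum_congr rfl
    intro j _
    rw [← pow_mul, ← pow_mul, Nat.mul_comm]
  rw [hswap]
  have hinner : ∀ v ∈ Finset.range n, (v:ℂ)*((n:ℂ)-v) * (∑ j ∈ (Finset.range n).erase 0, (ζ^v)^j)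
      = -((v:ℂ)*((n:ℂ)-v)) := by
    intro v hv
    rw [Finset.mem_range] at hv
    by_cases hv0 : v = 0
    · simp [hv0]
    · have hx1 : ζ^v ≠ 1 := hζk1 v (by omega) hv
      have hxn : (ζ^v)^n = 1 := by rw [← pow_mul, mul_comm, pow_mul, hζn, one_pow]
      have hgeom : ∑ j ∈ Finset.range n, (ζ^v)^j = 0 := by
        rw [geom_sum_eq hx1, hxn, sub_self, zero_div]
      have herase : ∑ j ∈ (Finset.range n).erase 0, (ζ^v)^j = -1 := by
        have := Finset.sum_erase_add (Finset.range n) (fun j => (ζ^v)^j)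
          (Finset.mem_range.mpr (by omega : 0 < n))
        simp only [pow_zero] at this
        have h2 := this.trans hgeom
        linear_combination h2
      rw [herase]; ring
  rw [Finset.sum_congr rfl hinner]
  rw [Finset.sum_neg_distrib]
  rw [csum_vnv]
  rw [show (((n:ℝ)^2 - 1)/12 : ℝ) = (((n:ℝ)^2-1)/12) from rfl]
  push_cast
  field_simp
  ring

theorem torus2_thin_asymptotic (c : ℕ) (hc : 4 ≤ c) :
    Filter.Tendsto (fun n : ℕ => Rave2 c n / (n : ℝ)) Filter.atTop
      (nhds (1 / (12 * (c : ℝ)))) := by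
  have hcn : c ≠ 0 := by omega
  have hc0 : (0:ℝ) < c := by exact_mod_cast Nat.pos_of_ne_zero hcn
  have hcne : (c:ℝ) ≠ 0 := ne_of_gt hc0
  set g : ℕ → ℕ → ℝ := fun i n =>
    (∑ j ∈ Finset.range n, if i = 0 ∧ j = 0 then (0:ℝ)
      else 1 / (4 - 2 * Real.cos (2 * Real.pi * i / c) - 2 * Real.cos (2 * Real.pi * j / n)))
      / ((c:ℝ) * (n:ℝ)^2) with hg
  have hre : ∀ n : ℕ, Rave2 c n / (n:ℝ) = ∑ i ∈ Finset.range c, g i n := by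
    intro n
    rw [Rave2, Finset.mul_sum, Finset.sum_div]
    exact Finset.sum_congr rfl (fun i _ => by rw [hg]; ring)
  have hLsum : ∑ i ∈ Finset.range c, (if i = 0 then 1/(12*(c:ℝ)) else 0) = 1/(12*(c:ℝ)) := by
    rw [Finset.sum_ite_eq' (Finset.range c) 0 (fun _ => 1/(12*(c:ℝ)))]
    simp [Nat.pos_of_ne_zero hcn]
  have key : Filter.Tendsto (fun n : ℕ => ∑ i ∈ Finset.range c, g i n) Filter.atTop
      (nhds (1 / (12 * (c:ℝ)))) := by
    rw [← hLsum]
    apply tendsto_finset_sum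
    intro i hi
    by_cases hi0 : i = 0
    · -- main term
      subst hi0
      rw [if_pos rfl]
      have htend : Filter.Tendsto
          (fun n : ℕ => 1/(12*(c:ℝ)) - (1/(12*(c:ℝ))) * ((1/(n:ℝ)) * (1/(n:ℝ))))
          Filter.atTop (nhds (1/(12*(c:ℝ)))) := by
        have h1 := tendsto_one_div_atTop_nhds_zero_nat (𝕜 := ℝ)
        have h2 := (h1.mul h1).const_mul (1/(12*(c:ℝ)))
        have h3 := Filter.Tendsto.const_sub (1/(12*(c:ℝ))) h2
        simpa using h3
      apply Filter.Tendsto.congr' _ htend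
      filter_upwards [Filter.eventually_ge_atTop 1] with n hn
      have hnne : (n:ℝ) ≠ 0 := by
        have : (0:ℝ) < n := by exact_mod_cast Nat.pos_of_ne_zero (by omega)
        exact ne_of_gt this
      have hginner : g 0 n = (((n:ℝ)^2 - 1)/12) / ((c:ℝ)*(n:ℝ)^2) := by
        rw [hg]
        simp only
        congr 1
        rw [← sumA n hn]
        apply Finset.sum_congr rfl
        intro j _
        norm_num [Real.cos_zero]
      rw [hginner]
      field_simp
    · -- vanishing terms
      rw [if_neg hi0]
      rw [Finset.mem_range] at hi
      set D : ℝ := 2 - 2 * Real.cos (2 * Real.pi * i / c) with hD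
      have hDpos : 0 < D := by
        rw [hD]
        have hle : Real.cos (2 * Real.pi * i / c) ≤ 1 := Real.cos_le_one _
        have hne1 : Real.cos (2 * Real.pi * i / c) ≠ 1 := by
          rw [Ne, Real.cos_eq_one_iff]
          rintro ⟨m, hm⟩
          have hπ : Real.pi ≠ 0 := Real.pi_ne_zero
          have him : (i:ℝ) = (m:ℝ) * c := by
            field_simp at hm
            nlinarith [Real.pi_pos]
          have hiz : (i:ℤ) = m * c := by exact_mod_cast him
          have h1 : (0:ℤ) < i := by exact_mod_cast Nat.pos_of_ne_zero hi0
          have h2 : (i:ℤ) < c := by exact_mod_cast hi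
          have h3 : (0:ℤ) < c := by exact_mod_cast Nat.pos_of_ne_zero hcn
          have hm0 : 0 < m := by nlinarith
          nlinarith
        linarith [lt_of_le_of_ne hle hne1]
      have hbound : ∀ n : ℕ, ∀ j : ℕ,
          D ≤ 4 - 2 * Real.cos (2 * Real.pi * i / c) - 2 * Real.cos (2 * Real.pi * j / n) := by
        intro n j
        have := Real.cos_le_one (2 * Real.pi * j / n)
        rw [hD]; linarith
      have hnonneg : ∀ n : ℕ, 0 ≤ g i n := by
        intro n
        rw [hg]
        apply div_nonneg _ (by positivity)
        apply Finset.sum_nonneg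
        intro j _
        rw [if_neg (by simp [hi0])]
        exact div_nonneg zero_le_one (le_trans hDpos.le (hbound n j))
      have hub : ∀ n : ℕ, g i n ≤ ((n:ℝ) * (1/D)) / ((c:ℝ) * (n:ℝ)^2) := by
        intro n
        rcases Nat.eq_zero_or_pos n with h0 | hpos
        · subst h0
          simp [hg]
        · have hpos' : (0:ℝ) < (c:ℝ) * (n:ℝ)^2 := by
            have : (0:ℝ) < (n:ℝ) := by exact_mod_cast hpos
            positivity
          rw [hg]
          simp only
          rw [div_le_div_iff_of_pos_right hpos']
          calc (∑ j ∈ Finset.range n, if i = 0 ∧ j = 0 then (0:ℝ)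
                else 1 / (4 - 2 * Real.cos (2 * Real.pi * i / c) - 2 * Real.cos (2 * Real.pi * j / n)))
              ≤ ∑ _j ∈ Finset.range n, 1/D := by
                apply Finset.sum_le_sum
                intro j _
                rw [if_neg (by simp [hi0])]
                exact one_div_le_one_div_of_le hDpos (hbound n j)
            _ = (n:ℝ) * (1/D) := by
                rw [Finset.sum_const, Finset.card_range, nsmul_eq_mul]
      have htail : Filter.Tendsto (fun n : ℕ => ((n:ℝ) * (1/D)) / ((c:ℝ) * (n:ℝ)^2))
          Filter.atTop (nhds 0) := by
        have h1 := tendsto_one_div_atTop_nhds_zero_nat.const_mul (1/(D*(c:ℝ)))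
        rw [mul_zero] at h1
        apply Filter.Tendsto.congr' _ h1
        filter_upwards [Filter.eventually_ge_atTop 1] with n hn
        have hnne : (n:ℝ) ≠ 0 := by
          have : (0:ℝ) < n := by exact_mod_cast Nat.pos_of_ne_zero (by omega)
          exact ne_of_gt this
        field_simp
      exact squeeze_zero hnonneg hub htail
  exact Filter.Tendsto.congr (fun n => (hre n).symm) key
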